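/- Let X_1, X_2, ... be i.i.d. real random variables with mean 0 and finite variance σ², and let S_k = X_1 + ... + X_k. Then for all x and n, P(max_{1 ≤ k ≤ n} S_k ≥ x) ≤ 2 P(S_n ≥ x − √(2nσ²)). -/

import Mathlib

open MeasureTheory ProbabilityTheory

lemma half_bound {Ω : Type*} [MeasurableSpace Ω] (μ : Measure Ω) [IsProbabilityMeasure μ]
    (Y : Ω → ℝ) (hY : MemLp Y 2 μ) (hEY : ∫ ω, Y ω ∂μ = 0)
    {c : ℝ} (hvc : 2 * variance Y μ ≤ c ^ 2) (hc0 : 0 ≤ c) :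
    μ {ω | Y ω < -c} ≤ 1/2 := by
  have hvar0 : 0 ≤ variance Y μ := variance_nonneg _ _
  have hEY' : μ[Y] = 0 := hEY
  rcases lt_or_eq_of_le hc0 with hc | hc
  · have hcheb := meas_ge_le_variance_div_sq (μ := μ) hY hc
    have hsub : {ω | Y ω < -c} ⊆ {ω | c ≤ |Y ω - μ[Y]|} := by
      intro ω hω
      simp only [Set.mem_setOf_eq] at hω ⊢
      rw [hEY', sub_zero]
      have : c < -Y ω := by linarith
      calc c ≤ -Y ω := this.le
        _ ≤ |Y ω| := by rw [abs_eq_max_neg]; exact le_max_right _ _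
    refine (measure_mono hsub).trans (hcheb.trans ?_)
    have h1 : variance Y μ / c ^ 2 ≤ 1/2 := by
      rw [div_le_iff₀ (by positivity)]
      nlinarith
    calc ENNReal.ofReal (variance Y μ / c ^ 2) ≤ ENNReal.ofReal (1/2) :=
          ENNReal.ofReal_le_ofReal h1
      _ = 1/2 := by
          rw [ENNReal.ofReal_div_of_pos (by norm_num)]
          norm_num
  · have hv0 : variance Y μ = 0 := by nlinarith
    have hnull : ∀ m : ℕ, μ {ω | (1 : ℝ)/(m+1) ≤ |Y ω - μ[Y]|} = 0 := by
      intro m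
      have hpos : (0:ℝ) < 1/(m+1) := by positivity
      have := meas_ge_le_variance_div_sq (μ := μ) hY hpos
      rw [hv0] at this
      simpa using this
    have hsub : {ω | Y ω < -c} ⊆ ⋃ m : ℕ, {ω | (1:ℝ)/(m+1) ≤ |Y ω - μ[Y]|} := by
      intro ω hω
      simp only [Set.mem_setOf_eq, ← hc] at hω
      have habs : 0 < |Y ω - μ[Y]| := by
        rw [hEY', sub_zero, abs_pos]; linarith
      obtain ⟨m, hm⟩ := exists_nat_one_div_lt habs
      exact Set.mem_iUnion.2 ⟨m, hm.le⟩
    calc μ {ω | Y ω < -c} ≤ μ (⋃ m : ℕ, {ω | (1:ℝ)/(m+1) ≤ |Y ω - μ[Y]|}) := measure_mono hsub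
      _ = 0 := measure_iUnion_null hnull
      _ ≤ 1/2 := zero_le

/-- Partial-sum functional on a tuple indexed by a finset of naturals. -/
noncomputable def psum (s : Finset ℕ) (j : ℕ) (y : {i // i ∈ s} → ℝ) : ℝ :=
  ∑ i ∈ Finset.univ.filter (fun i : {i // i ∈ s} => (i : ℕ) ≤ j), y i

lemma psum_measurable (s : Finset ℕ) (j : ℕ) : Measurable (psum s j) :=
  Finset.measurable_sum _ fun i _ => measurable_pi_apply i

lemma psum_apply (k j : ℕ) (hj : j ≤ k) (f : ℕ → ℝ) :
    psum (Finset.Icc 1 k) j (fun i => f i) = ∑ i ∈ Finset.Icc 1 j, f i := by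
  unfold psum
  rw [Finset.sum_filter, Finset.univ_eq_attach]
  rw [Finset.sum_attach (Finset.Icc 1 k) (fun m => if m ≤ j then f m else 0)]
  rw [← Finset.sum_filter]
  congr 1
  ext i
  simp only [Finset.mem_filter, Finset.mem_Icc]
  omega

lemma sum_subtype_eq (s : Finset ℕ) (f : ℕ → ℝ) :
    (∑ i : {i // i ∈ s}, f i) = ∑ i ∈ s, f i := by
  rw [Finset.univ_eq_attach, Finset.sum_attach]

/-- Lévy/Petrov maximal inequality: if `X₁, X₂, …` are i.i.d. centered real
random variables with finite variance `σ²` and `S_k = X₁ + ⋯ + X_k`, then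
`P(max_{1 ≤ k ≤ n} S_k ≥ x) ≤ 2 P(S_n ≥ x - √(2 n σ²))`. -/
theorem levy_maximal_inequality {Ω : Type*} [MeasurableSpace Ω]
    (μ : Measure Ω) [IsProbabilityMeasure μ]
    (X : ℕ → Ω → ℝ) (hmeas : ∀ i, Measurable (X i))
    (hindep : iIndepFun X μ)
    (hident : ∀ i, IdentDistrib (X i) (X 1) μ μ)
    (hmean : ∫ ω, X 1 ω ∂μ = 0)
    (hL2 : MemLp (X 1) 2 μ)
    (n : ℕ) (hn : 0 < n) (x : ℝ) :
    μ {ω | x ≤ (Finset.Icc 1 n).sup' (Finset.nonempty_Icc.mpr hn)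
          (fun k => ∑ i ∈ Finset.Icc 1 k, X i ω)}
      ≤ 2 * μ {ω | x - Real.sqrt (2 * n * variance (X 1) μ)
          ≤ ∑ i ∈ Finset.Icc 1 n, X i ω} := by
  classical
  set σ2 := variance (X 1) μ with hσ2def
  have hσ2nn : 0 ≤ σ2 := variance_nonneg _ _
  set c := Real.sqrt (2 * n * σ2) with hcdef
  have hc0 : 0 ≤ c := Real.sqrt_nonneg _
  have hcsq : c ^ 2 = 2 * n * σ2 := Real.sq_sqrt (by positivity)
  -- basic facts about each `X i`
  have hXL2 : ∀ i, MemLp (X i) 2 μ := fun i => (hident i).symm.memLp_snd hL2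
  have hXint : ∀ i, Integrable (X i) μ := fun i => (hXL2 i).integrable one_le_two
  have hXmean : ∀ i, ∫ ω, X i ω ∂μ = 0 := fun i => by
    rw [← hmean]; exact (hident i).integral_eq
  have hXvar : ∀ i, variance (X i) μ = σ2 := fun i => (hident i).variance_eq
  -- partial and tail sums
  set S : ℕ → Ω → ℝ := fun k ω => ∑ i ∈ Finset.Icc 1 k, X i ω with hSdef
  set T : ℕ → Ω → ℝ := fun k ω => ∑ i ∈ Finset.Icc (k+1) n, X i ω with hTdef
  have hSmeas : ∀ k, Measurable (S k) := fun k => Finset.measurable_sum _ fun i _ => hmeas i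
  have hTmeas : ∀ k, Measurable (T k) := fun k => Finset.measurable_sum _ fun i _ => hmeas i
  have hsplit : ∀ k, k ≤ n → ∀ ω, S n ω = S k ω + T k ω := by
    intro k hk ω
    have h1 : Finset.Icc 1 n = Finset.Icc 1 k ∪ Finset.Icc (k+1) n := by
      ext i; simp only [Finset.mem_Icc, Finset.mem_union]; omega
    have h2 : Disjoint (Finset.Icc 1 k) (Finset.Icc (k+1) n) := by
      simp only [Finset.disjoint_left, Finset.mem_Icc]; omega
    simp only [hSdef, hTdef]
    rw [h1, Finset.sum_union h2]
  -- mean & variance of tail sums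
  have hTmean : ∀ k, ∫ ω, T k ω ∂μ = 0 := by
    intro k
    simp only [hTdef]
    rw [integral_finset_sum _ fun i _ => hXint i]
    simp [hXmean]
  have hTL2 : ∀ k, MemLp (T k) 2 μ := by
    intro k
    have heq : T k = ∑ i ∈ Finset.Icc (k+1) n, X i := by
      ext ω; simp [hTdef]
    rw [heq]
    exact memLp_finset_sum' _ fun i _ => hXL2 i
  have hTvar : ∀ k, variance (T k) μ ≤ n * σ2 := by
    intro k
    have heq : T k = ∑ i ∈ Finset.Icc (k+1) n, X i := by
      ext ω; simp [hTdef]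
    have hv : variance (T k) μ = ∑ i ∈ Finset.Icc (k+1) n, variance (X i) μ := by
      rw [heq]
      exact IndepFun.variance_sum (fun i _ => hXL2 i)
        (fun i _ j _ hij => hindep.indepFun hij)
    rw [hv]
    have : ∑ i ∈ Finset.Icc (k+1) n, variance (X i) μ
        = (Finset.Icc (k+1) n).card * σ2 := by
      rw [Finset.sum_congr rfl fun i _ => hXvar i, Finset.sum_const, nsmul_eq_mul]
    rw [this]
    have hcard : ((Finset.Icc (k+1) n).card : ℝ) ≤ (n : ℝ) := by
      rw [Nat.card_Icc]
      exact_mod_cast (by omega : n + 1 - (k + 1) ≤ n)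
    nlinarith
  -- the "bad tail" events have probability at most 1/2
  have hB : ∀ k, μ {ω | T k ω < -c} ≤ 1/2 := by
    intro k
    refine half_bound μ (T k) (hTL2 k) (hTmean k) ?_ hc0
    rw [hcsq]
    have := hTvar k
    nlinarith
  -- events
  set A : ℕ → Set Ω := fun k =>
    {ω | (∀ j ∈ Finset.Icc 1 (k-1), S j ω < x) ∧ x ≤ S k ω} with hAdef
  set B : ℕ → Set Ω := fun k => {ω | T k ω < -c} with hBdef
  have hAmeas : ∀ k, MeasurableSet (A k) := by
    intro k
    have h : A k = (⋂ j ∈ Finset.Icc 1 (k-1), {ω | S j ω < x}) ∩ {ω | x ≤ S k ω} := by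
      ext ω
      simp only [hAdef, Set.mem_setOf_eq, Set.mem_inter_iff, Set.mem_iInter]
    rw [h]
    exact (MeasurableSet.biInter (Finset.countable_toSet _)
        fun j _ => measurableSet_lt (hSmeas j) measurable_const).inter
      (measurableSet_le measurable_const (hSmeas k))
  have hBmeas : ∀ k, MeasurableSet (B k) :=
    fun k => measurableSet_lt (hTmeas k) measurable_const
  -- independence of A k and B k
  have hAB : ∀ k, μ (A k ∩ B k) = μ (A k) * μ (B k) := by
    intro k
    have hd : Disjoint (Finset.Icc 1 k) (Finset.Icc (k+1) n) := by
      simp only [Finset.disjoint_left, Finset.mem_Icc]; omega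
    have hI := hindep.indepFun_finset _ _ hd hmeas
    set E : Set ({i // i ∈ Finset.Icc 1 k} → ℝ) :=
      {y | (∀ j ∈ Finset.Icc 1 (k-1), psum (Finset.Icc 1 k) j y < x)
        ∧ x ≤ psum (Finset.Icc 1 k) k y} with hEdef
    set F : Set ({i // i ∈ Finset.Icc (k+1) n} → ℝ) :=
      {y | (∑ i : {i // i ∈ Finset.Icc (k+1) n}, y i) < -c} with hFdef
    have hEm : MeasurableSet E := by
      have h : E = (⋂ j ∈ Finset.Icc 1 (k-1), {y | psum (Finset.Icc 1 k) j y < x})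
          ∩ {y | x ≤ psum (Finset.Icc 1 k) k y} := by
        ext y
        simp only [hEdef, Set.mem_setOf_eq, Set.mem_inter_iff, Set.mem_iInter]
      rw [h]
      exact (MeasurableSet.biInter (Finset.countable_toSet _)
          fun j _ => measurableSet_lt (psum_measurable _ _) measurable_const).inter
        (measurableSet_le measurable_const (psum_measurable _ _))
    have hFm : MeasurableSet F :=
      measurableSet_lt (Finset.measurable_sum _ fun i _ => measurable_pi_apply i)
        measurable_const
    have hApre : A k = (fun ω (i : {i // i ∈ Finset.Icc 1 k}) => X i ω) ⁻¹' E := by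
      ext ω
      simp only [hAdef, hEdef, Set.mem_setOf_eq, Set.mem_preimage]
      have hps : ∀ j, j ≤ k →
          psum (Finset.Icc 1 k) j (fun i : {i // i ∈ Finset.Icc 1 k} => X i ω)
            = S j ω := fun j hj => psum_apply k j hj (fun i => X i ω)
      constructor
      · rintro ⟨h1, h2⟩
        refine ⟨fun j hj => ?_, ?_⟩
        · rw [hps j (by simp only [Finset.mem_Icc] at hj; omega)]
          exact h1 j hj
        · rw [hps k le_rfl]; exact h2
      · rintro ⟨h1, h2⟩
        refine ⟨fun j hj => ?_, ?_⟩
        · have := h1 j hj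
          rwa [hps j (by simp only [Finset.mem_Icc] at hj; omega)] at this
        · rwa [hps k le_rfl] at h2
    have hBpre : B k = (fun ω (i : {i // i ∈ Finset.Icc (k+1) n}) => X i ω) ⁻¹' F := by
      ext ω
      simp only [hBdef, hFdef, Set.mem_setOf_eq, Set.mem_preimage]
      rw [sum_subtype_eq (Finset.Icc (k+1) n) (fun i => X i ω)]
    rw [hApre, hBpre]
    exact hI.measure_inter_preimage_eq_mul _ _ hEm hFm
  -- hence μ (A k) ≤ 2 μ (A k \ B k)
  have hA2 : ∀ k, μ (A k) ≤ 2 * μ (A k ∩ (B k)ᶜ) := by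
    intro k
    have key : μ (A k ∩ B k) + μ (A k \ B k) = μ (A k) :=
      measure_inter_add_diff _ (hBmeas k)
    have hdiff : A k \ B k = A k ∩ (B k)ᶜ := Set.diff_eq _ _
    have h1 : μ (A k ∩ B k) ≤ μ (A k) / 2 := by
      rw [hAB k]
      calc μ (A k) * μ (B k) ≤ μ (A k) * (1/2) := mul_le_mul_right (hB k) _
        _ = μ (A k) / 2 := mul_one_div _ _
    have h2 : μ (A k) ≤ μ (A k) / 2 + μ (A k ∩ (B k)ᶜ) := by
      calc μ (A k) = μ (A k ∩ B k) + μ (A k \ B k) := key.symm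
        _ ≤ μ (A k) / 2 + μ (A k \ B k) := add_le_add_left h1 _
        _ = μ (A k) / 2 + μ (A k ∩ (B k)ᶜ) := by rw [hdiff]
    have hfin : μ (A k) / 2 ≠ ⊤ :=
      (ENNReal.div_lt_top (measure_ne_top μ _) (by norm_num)).ne
    have h3 : μ (A k) / 2 ≤ μ (A k ∩ (B k)ᶜ) := by
      have h4 : μ (A k) / 2 + μ (A k) / 2 ≤ μ (A k) / 2 + μ (A k ∩ (B k)ᶜ) := by
        rw [ENNReal.add_halves]; exact h2
      exact (ENNReal.add_le_add_iff_left hfin).mp h4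
    calc μ (A k) = 2 * (μ (A k) / 2) := by
          rw [ENNReal.mul_div_cancel' (by norm_num) (by norm_num)]
      _ ≤ 2 * μ (A k ∩ (B k)ᶜ) := mul_le_mul_right h3 _
  -- each good piece is contained in the target event
  have hub : ∀ k ∈ Finset.Icc 1 n, A k ∩ (B k)ᶜ ⊆ {ω | x - c ≤ S n ω} := by
    intro k hk ω hω
    obtain ⟨hωA, hωB⟩ := hω
    have h2 : x ≤ S k ω := hωA.2
    have h3 : -c ≤ T k ω := by
      simpa only [hBdef, Set.mem_compl_iff, Set.mem_setOf_eq, not_lt] using hωB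
    have hk' : k ≤ n := (Finset.mem_Icc.mp hk).2
    simp only [Set.mem_setOf_eq]
    rw [hsplit k hk' ω]
    linarith
  -- the A k are pairwise disjoint
  have hdisj' : ∀ k l, 1 ≤ k → k < l → Disjoint (A k) (A l) := by
    intro k l hk1 hkl
    rw [Set.disjoint_left]
    intro ω hωk hωl
    have h1 : x ≤ S k ω := hωk.2
    have h2 : S k ω < x := hωl.1 k (Finset.mem_Icc.mpr ⟨hk1, by omega⟩)
    linarith
  have hdisj : (↑(Finset.Icc 1 n) : Set ℕ).PairwiseDisjoint A := by
    intro k hk l hl hkl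
    rcases lt_or_gt_of_ne hkl with h | h
    · exact hdisj' k l (Finset.mem_Icc.mp hk).1 h
    · exact (hdisj' l k (Finset.mem_Icc.mp hl).1 h).symm
  -- the maximal event is the disjoint union of the A k
  have hcover : {ω | x ≤ (Finset.Icc 1 n).sup' (Finset.nonempty_Icc.mpr hn)
      (fun k => ∑ i ∈ Finset.Icc 1 k, X i ω)} = ⋃ k ∈ Finset.Icc 1 n, A k := by
    ext ω
    simp only [Set.mem_setOf_eq, Set.mem_iUnion, Finset.le_sup'_iff]
    constructor
    · intro h
      have hex : ∃ m, m ∈ Finset.Icc 1 n ∧ x ≤ S m ω := by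
        obtain ⟨b, hb, hxb⟩ := h
        exact ⟨b, hb, hxb⟩
      obtain ⟨hmem, hxm⟩ := Nat.find_spec hex
      refine ⟨Nat.find hex, ⟨hmem, fun j hj => ?_, hxm⟩⟩
      have hj' := Finset.mem_Icc.mp hj
      have hjlt : j < Nat.find hex := by
        have := (Finset.mem_Icc.mp hmem).1
        omega
      have hnot := Nat.find_min hex hjlt
      have hjmem : j ∈ Finset.Icc 1 n := by
        have := (Finset.mem_Icc.mp hmem).2
        exact Finset.mem_Icc.mpr ⟨hj'.1, by omega⟩
      by_contra hcon
      exact hnot ⟨hjmem, not_lt.mp hcon⟩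
    · rintro ⟨k, hk, hωA⟩
      exact ⟨k, hk, hωA.2⟩
  -- put everything together
  calc μ {ω | x ≤ (Finset.Icc 1 n).sup' (Finset.nonempty_Icc.mpr hn)
        (fun k => ∑ i ∈ Finset.Icc 1 k, X i ω)}
      = μ (⋃ k ∈ Finset.Icc 1 n, A k) := by rw [hcover]
    _ = ∑ k ∈ Finset.Icc 1 n, μ (A k) :=
        measure_biUnion_finset hdisj fun k _ => hAmeas k
    _ ≤ ∑ k ∈ Finset.Icc 1 n, 2 * μ (A k ∩ (B k)ᶜ) :=
        Finset.sum_le_sum fun k _ => hA2 k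
    _ = 2 * ∑ k ∈ Finset.Icc 1 n, μ (A k ∩ (B k)ᶜ) := by
        rw [Finset.mul_sum]
    _ = 2 * μ (⋃ k ∈ Finset.Icc 1 n, (A k ∩ (B k)ᶜ)) := by
        rw [measure_biUnion_finset (hdisj.mono fun k => Set.inter_subset_left)
          fun k _ => (hAmeas k).inter (hBmeas k).compl]
    _ ≤ 2 * μ {ω | x - c ≤ S n ω} := by
        gcongr
        exact Set.iUnion₂_subset hub
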